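/- Let (Ω,𝓕,P) be a probability space, ι a finite index type, (Ωᵢ,𝓕ᵢ,μᵢ) σ-finite measure spaces for i ∈ ι, and Xᵢ : Ω → Ωᵢ measurable maps which form an independent family. Let X : Ω → Π i, Ωᵢ be the joint map ω ↦ (i ↦ Xᵢ(ω)). Suppose f : (Π i, Ωᵢ) → [0,∞] is measurable and is a density of P.map X with respect to the product measure Measure.pi μ, and for each i ∈ ι, fᵢ : Ωᵢ → [0,∞] is measurable and is a density of P.map Xᵢ with respect to μᵢ. Then f(ω) = ∏_{i∈ι} fᵢ(ω i) for (Measure.pi μ)-almost every ω ∈ Π i, Ωᵢ. (Paper's Corollary 4.5.1: the joint density of independent random objects factorizes into the product of their marginal densities.) -/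

import Mathlib

open MeasureTheory ProbabilityTheory Finset
open scoped ENNReal

lemma lmarginal_prod_aux {ι : Type*} [Fintype ι] [DecidableEq ι] {α : ι → Type*}
    [∀ i, MeasurableSpace (α i)] (μ : ∀ i, Measure (α i)) [∀ i, SigmaFinite (μ i)]
    (g : ∀ i, α i → ℝ≥0∞) (hg : ∀ i, Measurable (g i)) (s : Finset ι) (x : ∀ i, α i) :
    (∫⋯∫⁻_s, (fun ω => ∏ i, g i (ω i)) ∂μ) x
      = (∏ i ∈ s, ∫⁻ t, g i t ∂μ i) * ∏ i ∈ sᶜ, g i (x i) := by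
  induction s using Finset.induction generalizing x with
  | empty => simp
  | @insert i s hi ih =>
    rw [lmarginal_insert _ (by exact Finset.measurable_prod _ fun j _ => (hg j).comp (measurable_pi_apply j)) hi]
    have hcompl : sᶜ = insert i (insert i s)ᶜ := by
      ext j
      rcases eq_or_ne j i with rfl | hne
      · simp [hi]
      · simp [hne]
    have hinot : i ∉ (insert i s)ᶜ := by simp
    calc (∫⁻ t, (∫⋯∫⁻_s, (fun ω => ∏ j, g j (ω j)) ∂μ) (Function.update x i t) ∂μ i)
        = ∫⁻ t, (∏ j ∈ s, ∫⁻ u, g j u ∂μ j) * ∏ j ∈ sᶜ, g j (Function.update x i t j) ∂μ i := by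
          simp_rw [ih]
      _ = ∫⁻ t, (∏ j ∈ s, ∫⁻ u, g j u ∂μ j) * (g i t * ∏ j ∈ (insert i s)ᶜ, g j (x j)) ∂μ i := by
          congr 1; ext t
          rw [hcompl, Finset.prod_insert hinot, Function.update_self]
          refine congrArg _ (congrArg (g i t * ·) ?_)
          refine Finset.prod_congr rfl fun j hj => ?_
          have hne : j ≠ i := by rintro rfl; exact hinot hj
          rw [Function.update_of_ne hne]
      _ = (∏ j ∈ insert i s, ∫⁻ u, g j u ∂μ j) * ∏ j ∈ (insert i s)ᶜ, g j (x j) := by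
          rw [lintegral_const_mul _ ((hg i).mul_const _),
            lintegral_mul_const _ (hg i), Finset.prod_insert hi]
          ring

lemma lintegral_pi_prod_aux {ι : Type*} [Fintype ι] {α : ι → Type*}
    [∀ i, MeasurableSpace (α i)] (μ : ∀ i, Measure (α i)) [∀ i, SigmaFinite (μ i)]
    (g : ∀ i, α i → ℝ≥0∞) (hg : ∀ i, Measurable (g i)) :
    ∫⁻ ω, ∏ i, g i (ω i) ∂Measure.pi μ = ∏ i, ∫⁻ t, g i t ∂μ i := by
  classical
  rcases isEmpty_or_nonempty (∀ i, α i) with he | hne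
  · have : ¬ ∀ i, Nonempty (α i) := fun h => he.false (Classical.nonempty_pi.mpr h).some
    push_neg at this
    obtain ⟨i, hi⟩ := this
    haveI : IsEmpty (α i) := hi
    have h1 : Measure.pi μ = 0 := (Measure.pi μ).eq_zero_of_isEmpty
    have h2 : μ i = 0 := (μ i).eq_zero_of_isEmpty
    rw [h1, lintegral_zero_measure]
    rw [Finset.prod_eq_zero (Finset.mem_univ i) (by rw [h2, lintegral_zero_measure])]
  · obtain ⟨x⟩ := hne
    rw [lintegral_eq_lmarginal_univ x, lmarginal_prod_aux μ g hg Finset.univ x]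
    simp


/-- Paper's Corollary 4.5.1: if the random objects `Xᵢ` are independent and `f` is a
density of the joint law with respect to the product reference measure `Measure.pi μ`,
while each `fᵢ` is a density of the law of `Xᵢ` with respect to `μᵢ`, then the joint
density factorizes: `f(ω) = ∏ᵢ fᵢ(ωᵢ)` for `Measure.pi μ`-a.e. `ω`. -/
theorem joint_density_eq_prod_of_marginals_of_indep
    {Ω : Type*} [MeasurableSpace Ω] (P : Measure Ω) [IsProbabilityMeasure P]
    {ι : Type*} [Fintype ι] {α : ι → Type*} [∀ i, MeasurableSpace (α i)]
    (μ : ∀ i, Measure (α i)) [∀ i, SigmaFinite (μ i)]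
    (X : ∀ i, Ω → α i) (hX : ∀ i, Measurable (X i))
    (hIndep : iIndepFun X P)
    (f : (∀ i, α i) → ℝ≥0∞) (hf : Measurable f)
    (hfdens : ∀ A : Set (∀ i, α i), MeasurableSet A →
      ∫⁻ ω in A, f ω ∂(Measure.pi μ) = P ((fun ω i => X i ω) ⁻¹' A))
    (fmar : ∀ i, α i → ℝ≥0∞) (hfmar : ∀ i, Measurable (fmar i))
    (hfmardens : ∀ i, ∀ A : Set (α i), MeasurableSet A →
      ∫⁻ x in A, fmar i x ∂(μ i) = P (X i ⁻¹' A)) :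
    ∀ᵐ ω ∂(Measure.pi μ), f ω = ∏ i, fmar i (ω i) := by
  classical
  set g : (∀ i, α i) → ℝ≥0∞ := fun ω => ∏ i, fmar i (ω i) with hgdef
  have hgm : Measurable g :=
    Finset.measurable_prod _ fun i _ => (hfmar i).comp (measurable_pi_apply i)
  have hjm : Measurable (fun ω i => X i ω) := measurable_pi_lambda _ hX
  haveI : ∀ i, IsProbabilityMeasure (P.map (X i)) :=
    fun i => Measure.isProbabilityMeasure_map (hX i).aemeasurable
  -- joint law equals product of marginal laws
  have h2 : P.map (fun ω i => X i ω) = Measure.pi (fun i => P.map (X i)) := by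
    refine (Measure.pi_eq fun s hs => ?_).symm
    rw [Measure.map_apply hjm (MeasurableSet.univ_pi hs)]
    have hpre : (fun ω i => X i ω) ⁻¹' Set.pi Set.univ s = ⋂ i, X i ⁻¹' s i := by
      ext ω; simp [Set.mem_pi]
    rw [hpre]
    have hind := (iIndepFun_iff_measure_inter_preimage_eq_mul.mp hIndep)
      Finset.univ (sets := s) (fun i _ => hs i)
    simp only [Finset.mem_univ, Set.iInter_true] at hind
    rw [hind]
    exact Finset.prod_congr rfl fun i _ =>
      (Measure.map_apply (hX i) (hs i)).symm
  -- withDensity g equals product of marginal laws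
  have h1 : (Measure.pi μ).withDensity g = Measure.pi (fun i => P.map (X i)) := by
    refine (Measure.pi_eq fun s hs => ?_).symm
    rw [withDensity_apply g (MeasurableSet.univ_pi hs)]
    have hi : ∀ ω, (Set.pi Set.univ s).indicator g ω
        = ∏ i, (s i).indicator (fmar i) (ω i) := by
      intro ω
      by_cases hω : ω ∈ Set.pi Set.univ s
      · rw [Set.indicator_of_mem hω]
        exact Finset.prod_congr rfl fun i _ =>
          (Set.indicator_of_mem (hω i (Set.mem_univ i)) _).symm
      · rw [Set.indicator_of_notMem hω]
        rw [Set.mem_univ_pi] at hω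
        push_neg at hω
        obtain ⟨i, hi⟩ := hω
        exact (Finset.prod_eq_zero (Finset.mem_univ i)
          (Set.indicator_of_notMem hi _)).symm
    rw [← lintegral_indicator (MeasurableSet.univ_pi hs) g]
    simp_rw [hi]
    rw [lintegral_pi_prod_aux μ _ (fun i => (hfmar i).indicator (hs i))]
    refine Finset.prod_congr rfl fun i _ => ?_
    rw [lintegral_indicator (hs i), hfmardens i (s i) (hs i),
      Measure.map_apply (hX i) (hs i)]
  -- withDensity f equals joint law
  have h0 : (Measure.pi μ).withDensity f = P.map (fun ω i => X i ω) := by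
    refine Measure.ext fun A hA => ?_
    rw [withDensity_apply f hA, Measure.map_apply hjm hA, hfdens A hA]
  have hfg : (Measure.pi μ).withDensity f = (Measure.pi μ).withDensity g := by
    rw [h0, h1, h2]
  exact (withDensity_eq_iff_of_sigmaFinite hf.aemeasurable hgm.aemeasurable).mp hfg
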